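/- Let A be a K^p × L real matrix and define H(q) = (A A^T) · q^{⊗p} for q a positive semidefinite symmetric K×K matrix, where the dot denotes the entrywise inner product of K^p × K^p matrices. Then H is nondecreasing with respect to the Loewner order: if a ≤ b are positive semidefinite then H(a) ≤ H(b). -/

import Mathlib

open Matrix

/-- The `p`-fold Kronecker (tensor) power of a `K × K` matrix, with rows and
columns indexed by `Fin p → Fin K`. -/
noncomputable def kronPow {K : ℕ} (p : ℕ) (a : Matrix (Fin K) (Fin K) ℝ) :
    Matrix (Fin p → Fin K) (Fin p → Fin K) ℝ :=
  Matrix.of fun i j => ∏ n, a (i n) (j n)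

open Kronecker in
lemma kron_psd {m n : Type*} [Fintype m] [Fintype n] [DecidableEq m] [DecidableEq n]
    {M : Matrix m m ℝ} {N : Matrix n n ℝ} (hM : M.PosSemidef) (hN : N.PosSemidef) :
    (M ⊗ₖ N).PosSemidef := by
  exact hM.kronecker hN

open Kronecker in
lemma kronPow_succ {K : ℕ} (p : ℕ) (q : Matrix (Fin K) (Fin K) ℝ) :
    kronPow (p + 1) q =
      (q ⊗ₖ kronPow p q).submatrix (fun i => (i 0, fun n => i n.succ))
        (fun i => (i 0, fun n => i n.succ)) := by
  ext i j
  simp [kronPow, Matrix.kroneckerMap_apply, Fin.prod_univ_succ]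

lemma kronPow_psd_mono {K : ℕ} (p : ℕ) {a b : Matrix (Fin K) (Fin K) ℝ}
    (ha : a.PosSemidef) (hb : b.PosSemidef) (hab : (b - a).PosSemidef) :
    (kronPow p a).PosSemidef ∧ (kronPow p b - kronPow p a).PosSemidef := by
  induction p with
  | zero =>
    have h1 : ∀ q : Matrix (Fin K) (Fin K) ℝ, kronPow 0 q = 1 := by
      intro q
      ext i j
      simp [kronPow, Subsingleton.elim i j, Matrix.one_apply]
    constructor
    · rw [h1]; exact Matrix.PosSemidef.one
    · rw [h1, h1, sub_self]; exact Matrix.PosSemidef.zero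
  | succ p ih =>
    obtain ⟨hA, hD⟩ := ih
    have hB : (kronPow p b).PosSemidef := by
      have := hD.add hA
      simpa using this
    set e : (Fin (p + 1) → Fin K) → Fin K × (Fin p → Fin K) :=
      fun i => (i 0, fun n => i n.succ) with he
    have key : kronPow (p+1) b - kronPow (p+1) a =
        ((Matrix.kroneckerMap (· * ·) b (kronPow p b - kronPow p a)) +
         (Matrix.kroneckerMap (· * ·) (b - a) (kronPow p a))).submatrix e e := by
      rw [kronPow_succ, kronPow_succ]
      ext i j
      simp [Matrix.sub_apply, Matrix.add_apply, Matrix.submatrix_apply,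
        Matrix.kroneckerMap_apply]
      ring
    constructor
    · rw [kronPow_succ]
      exact (kron_psd ha hA).submatrix e
    · rw [key]
      exact ((kron_psd hb hD).add (kron_psd hab hA)).submatrix e

theorem stmt_2 (K p L : ℕ) (A : Matrix (Fin p → Fin K) (Fin L) ℝ)
    (H : Matrix (Fin K) (Fin K) ℝ → ℝ)
    (hH : ∀ q, H q = ∑ i, ∑ j, (A * A.transpose) i j * kronPow p q i j)
    (a b : Matrix (Fin K) (Fin K) ℝ)
    (ha : a.PosSemidef) (hb : b.PosSemidef) (hab : (b - a).PosSemidef) :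
    H a ≤ H b := by
  obtain ⟨-, hD⟩ := kronPow_psd_mono p ha hb hab
  set D := kronPow p b - kronPow p a with hDdef
  have hdiff : H b - H a = ∑ l, (fun i => A i l) ⬝ᵥ D *ᵥ (fun i => A i l) := by
    rw [hH, hH]
    rw [← Finset.sum_sub_distrib]
    simp_rw [← Finset.sum_sub_distrib, ← mul_sub]
    have : ∀ i j, kronPow p b i j - kronPow p a i j = D i j := by
      intro i j; simp [hDdef, Matrix.sub_apply]
    simp_rw [this, Matrix.mul_apply, Matrix.transpose_apply, dotProduct,
      Matrix.mulVec, dotProduct, Finset.sum_mul, Finset.mul_sum]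
    conv_rhs => rw [Finset.sum_comm]
    refine Finset.sum_congr rfl fun i _ => ?_
    conv_rhs => rw [Finset.sum_comm]
    refine Finset.sum_congr rfl fun j _ => ?_
    refine Finset.sum_congr rfl fun l _ => ?_
    ring
  have hnn : 0 ≤ H b - H a := by
    rw [hdiff]
    apply Finset.sum_nonneg
    intro l _
    have := hD.dotProduct_mulVec_nonneg (fun i => A i l)
    simpa using this
  linarith
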